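/- Let G be an abelian group and f : G → G a group endomorphism. Write S = ⋂_{n≥1} f^n(G) for the intersection of the images of all iterates of f. Assume there exists N₀ ≥ 1 such that for every n ≥ 1, ker(f^n) ⊆ ker(f^{N₀}). Then f maps S into S and the restriction of f to S is a bijection of S onto itself. -/
import Mathlib


/-- Lemma C:phitaut (group-theoretic form): let `f` be an endomorphism of an
abelian group `G`, `S = ⋂_{n ≥ 1} f^n(G)`, and suppose all kernels of iterates of
`f` are contained in `ker (f^{N₀})` for some `N₀ ≥ 1`. Then `f` maps `S` into `S`
and restricts to a bijection of `S` onto itself. -/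
theorem sharp_restriction_bijective {G : Type*} [AddCommGroup G] (f : G →+ G)
    (N₀ : ℕ) (hN₀ : 1 ≤ N₀)
    (hker : ∀ n, 1 ≤ n → ∀ y : G, (⇑f)^[n] y = 0 → (⇑f)^[N₀] y = 0) :
    (∀ x ∈ ⋂ n ∈ Set.Ici 1, Set.range ((⇑f)^[n]),
        f x ∈ ⋂ n ∈ Set.Ici 1, Set.range ((⇑f)^[n])) ∧
      Set.BijOn f (⋂ n ∈ Set.Ici 1, Set.range ((⇑f)^[n]))
        (⋂ n ∈ Set.Ici 1, Set.range ((⇑f)^[n])) := by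
  set S := ⋂ n ∈ Set.Ici 1, Set.range ((⇑f)^[n]) with hS
  have hmem : ∀ x, x ∈ S ↔ ∀ n, 1 ≤ n → ∃ y, (⇑f)^[n] y = x := by
    intro x
    simp [hS, Set.mem_iInter, Set.mem_range]
  -- f maps S into S
  have hmaps : ∀ x ∈ S, f x ∈ S := by
    intro x hx
    rw [hmem] at hx ⊢
    intro n hn
    obtain ⟨y, hy⟩ := hx n hn
    exact ⟨f y, by rw [← Function.iterate_succ_apply, Function.iterate_succ_apply', hy]⟩
  -- kernel of f restricted to S is trivial
  have hinj0 : ∀ x ∈ S, f x = 0 → x = 0 := by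
    intro x hx hfx
    obtain ⟨y, hy⟩ := (hmem x).1 hx N₀ hN₀
    have h1 : (⇑f)^[N₀ + 1] y = 0 := by
      rw [Function.iterate_succ_apply', hy, hfx]
    have h2 := hker (N₀ + 1) (by omega) y h1
    rw [hy] at h2
    exact h2
  -- injectivity on S
  have hinj : Set.InjOn f S := by
    intro a ha b hb hab
    have hsub : a - b ∈ S := by
      rw [hmem] at ha hb ⊢
      intro n hn
      obtain ⟨ya, hya⟩ := ha n hn
      obtain ⟨yb, hyb⟩ := hb n hn
      exact ⟨ya - yb, by rw [iterate_map_sub f, hya, hyb]⟩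
    have h0 : a - b = 0 := hinj0 _ hsub (by rw [map_sub, hab, sub_self])
    exact sub_eq_zero.mp h0
  -- surjectivity onto S
  have hsurj : ∀ x ∈ S, ∃ y ∈ S, f y = x := by
    intro x hx
    rw [hmem] at hx
    obtain ⟨z, hz⟩ := hx (N₀ + 1) (by omega)
    refine ⟨(⇑f)^[N₀] z, ?_, ?_⟩
    · rw [hmem]
      intro m hm
      obtain ⟨w, hw⟩ := hx (m + N₀ + 1) (by omega)
      have hdiff : (⇑f)^[N₀ + 1] (z - (⇑f)^[m] w) = 0 := by
        rw [iterate_map_sub f, ← Function.iterate_add_apply, hz,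
          show N₀ + 1 + m = m + N₀ + 1 by omega, hw, sub_self]
      have hdiff0 : (⇑f)^[N₀] (z - (⇑f)^[m] w) = 0 :=
        hker (N₀ + 1) (by omega) _ hdiff
      have heq : (⇑f)^[N₀] z = (⇑f)^[N₀] ((⇑f)^[m] w) := by
        have := hdiff0
        rw [iterate_map_sub f, sub_eq_zero] at this
        exact this
      refine ⟨(⇑f)^[N₀] w, ?_⟩
      rw [heq, ← Function.iterate_add_apply, ← Function.iterate_add_apply,
        Nat.add_comm N₀ m]
    · exact (Function.iterate_succ_apply' (⇑f) N₀ z) ▸ hz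
  refine ⟨hmaps, hmaps, hinj, ?_⟩
  intro x hx
  obtain ⟨y, hy, hfy⟩ := hsurj x hx
  exact ⟨y, hy, hfy⟩
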